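/- Let H be a separable Hilbert space and let the Cantor function γ : [0,1] → [0,1] (the Devil's staircase) define α(a) = a ∘ γ on C([0,1]). Then the only lower semicontinuous section Φ : [0,1] → F([0,1]) of γ (a map with Φ(x) ⊆ γ⁻¹(x) closed, such that {x : V ∩ Φ(x) ≠ ∅} is open for every open V) is Φ ≡ ∅; consequently the only transfer operator for (C([0,1]), α) is the zero operator. -/

import Mathlib

open ComplexOrder unitInterval


lemma preCantorSet_subset_Icc : ∀ n, preCantorSet n ⊆ Set.Icc (0:ℝ) 1 := by
  intro n
  induction n with
  | zero => simp
  | succ n ih =>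
    rintro x (⟨u, hu, rfl⟩ | ⟨u, hu, rfl⟩) <;>
      obtain ⟨h0, h1⟩ := ih hu <;> constructor <;> simp <;> linarith

lemma gap_lemma : ∀ n, ∀ a b : ℝ, (1/3:ℝ)^n < b - a →
    ∃ z, z ∈ Set.Ioo a b ∧ z ∉ preCantorSet (n+1) := by
  intro n
  induction n with
  | zero =>
    intro a b hab
    simp only [pow_zero] at hab
    rcases le_or_gt b 1 with hb | hb
    · have hm : min b 0 ≤ b := min_le_left _ _
      have hm0 : min b 0 ≤ 0 := min_le_right _ _
      have ham : a < min b 0 := lt_min (by linarith) (by linarith)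
      refine ⟨(a + min b 0)/2, ⟨by linarith, by linarith⟩, fun hz => ?_⟩
      have h2 := (preCantorSet_subset_Icc 1 hz).1
      linarith
    · have hm : a ≤ max a 1 := le_max_left _ _
      have hm1 : (1:ℝ) ≤ max a 1 := le_max_right _ _
      have hmb : max a 1 < b := max_lt (by linarith) hb
      refine ⟨(max a 1 + b)/2, ⟨by linarith, by linarith⟩, fun hz => ?_⟩
      have h2 := (preCantorSet_subset_Icc 1 hz).2
      linarith
  | succ n ih =>
    intro a b hab
    have hpow : (0:ℝ) < (1/3)^(n+1) := pow_pos (by norm_num) _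
    have hab' : a < b := by linarith
    rcases le_or_gt b (1/3) with hb | hb
    · obtain ⟨w, hw, hwn⟩ := ih (3*a) (3*b) (by rw [pow_succ] at hab; linarith)
      refine ⟨w/3, ⟨by linarith [hw.1], by linarith [hw.2]⟩, ?_⟩
      rintro (⟨u, hu, hue⟩ | ⟨u, hu, hue⟩)
      · have hue' : u / 3 = w / 3 := hue
        have : u = w := by linarith
        exact hwn (this ▸ hu)
      · have hue' : (2 + u) / 3 = w / 3 := hue
        have h2 := (preCantorSet_subset_Icc _ hu).1
        have hw2 := hw.2
        linarith
    rcases le_or_gt (2/3) a with ha | ha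
    · obtain ⟨w, hw, hwn⟩ := ih (3*a - 2) (3*b - 2) (by rw [pow_succ] at hab; linarith)
      refine ⟨(2+w)/3, ⟨by linarith [hw.1], by linarith [hw.2]⟩, ?_⟩
      rintro (⟨u, hu, hue⟩ | ⟨u, hu, hue⟩)
      · have hue' : u / 3 = (2 + w) / 3 := hue
        have h2 := (preCantorSet_subset_Icc _ hu).2
        have hw1 := hw.1
        linarith
      · have hue' : (2 + u) / 3 = (2 + w) / 3 := hue
        have : u = w := by linarith
        exact hwn (this ▸ hu)
    · have h1 : a < min b (2/3) := lt_min hab' ha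
      have h2 : a ≤ max a (1/3) := le_max_left _ _
      have h3 : max a (1/3) < b := max_lt hab' hb
      have h4 : min b (2/3) ≤ b := min_le_left _ _
      have h5 : (1/3:ℝ) ≤ max a (1/3) := le_max_right _ _
      have h6 : min b (2/3) ≤ (2/3:ℝ) := min_le_right _ _
      have h7 : (1/3:ℝ) < min b (2/3) := lt_min hb (by norm_num)
      have h8 : max a (1/3:ℝ) < 2/3 := max_lt ha (by norm_num)
      refine ⟨(max a (1/3) + min b (2/3))/2, ⟨by linarith, by linarith⟩, ?_⟩
      rintro (⟨u, hu, hue⟩ | ⟨u, hu, hue⟩)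
      · have hue' : u / 3 = (max a (1/3) + min b (2/3))/2 := hue
        have := (preCantorSet_subset_Icc _ hu).2
        linarith
      · have hue' : (2 + u) / 3 = (max a (1/3) + min b (2/3))/2 := hue
        have := (preCantorSet_subset_Icc _ hu).1
        linarith

lemma exists_not_mem_cantorSet {a b : ℝ} (hab : a < b) :
    ∃ z, z ∈ Set.Ioo a b ∧ z ∉ cantorSet := by
  obtain ⟨n, hn⟩ := exists_pow_lt_of_lt_one (sub_pos.mpr hab) (by norm_num : (1/3:ℝ) < 1)
  obtain ⟨z, hz, hzn⟩ := gap_lemma n a b hn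
  exact ⟨z, hz, fun hc => hzn (Set.mem_iInter.mp hc (n+1))⟩

lemma exists_gt_of_isOpen {U : Set I} (hU : IsOpen U) {x : I} (hx : x ∈ U)
    (hx1 : (x:ℝ) < 1) : ∃ y ∈ U, x < y := by
  obtain ⟨ε, hε, hball⟩ := Metric.isOpen_iff.mp hU x hx
  have h1x : (0:ℝ) < 1 - x := by linarith
  set d : ℝ := min (ε/2) (1 - x) with hd
  have hd0 : 0 < d := lt_min (by linarith) h1x
  have hy1 : (x:ℝ) + d ≤ 1 := by have := min_le_right (ε/2) (1 - (x:ℝ)); linarith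
  refine ⟨⟨(x:ℝ) + d, ⟨by have := x.2.1; linarith, hy1⟩⟩, hball ?_, ?_⟩
  · rw [Metric.mem_ball, Subtype.dist_eq]
    simp only
    rw [Real.dist_eq, abs_of_nonneg (by linarith : (0:ℝ) ≤ (x:ℝ) + d - x)]
    have := min_le_left (ε/2) (1 - (x:ℝ)); linarith
  · exact Subtype.mk_lt_mk.mpr (by linarith)

lemma exists_lt_of_isOpen {U : Set I} (hU : IsOpen U) {x : I} (hx : x ∈ U)
    (hx0 : 0 < (x:ℝ)) : ∃ y ∈ U, y < x := by
  obtain ⟨ε, hε, hball⟩ := Metric.isOpen_iff.mp hU x hx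
  set d : ℝ := min (ε/2) (x:ℝ) with hd
  have hd0 : 0 < d := lt_min (by linarith) hx0
  have hy0 : (0:ℝ) ≤ (x:ℝ) - d := by have := min_le_right (ε/2) (x:ℝ); linarith
  refine ⟨⟨(x:ℝ) - d, ⟨hy0, by have := x.2.2; linarith⟩⟩, hball ?_, ?_⟩
  · rw [Metric.mem_ball, Subtype.dist_eq]
    simp only
    rw [Real.dist_eq, abs_of_nonpos (by linarith : (x:ℝ) - d - x ≤ 0)]
    have := min_le_left (ε/2) (x:ℝ); linarith
  · exact Subtype.mk_lt_mk.mpr (by linarith)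

lemma I_not_isOpen_singleton (x : I) : ¬ IsOpen ({x} : Set I) := by
  intro h
  rcases lt_or_eq_of_le x.2.2 with hx1 | hx1
  · obtain ⟨y, hy, hxy⟩ := exists_gt_of_isOpen h rfl hx1
    exact absurd hy (by simp [hxy.ne'])
  · obtain ⟨y, hy, hxy⟩ := exists_lt_of_isOpen h rfl (by rw [hx1]; norm_num)
    exact absurd hy (by simp [hxy.ne])

lemma cantor_part1 (γ : I → I) (hcont : Continuous γ) (hmono : Monotone γ)
    (h1 : γ 1 = 1)
    (hconst : ∀ x : I, (x : ℝ) ∉ cantorSet → ∃ W ∈ nhds x, ∀ y ∈ W, γ y = γ x)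
    (Φ : I → Set I) (hsect : ∀ x, Φ x ⊆ γ ⁻¹' {x})
    (hlsc : ∀ V : Set I, IsOpen V → IsOpen {x : I | (V ∩ Φ x).Nonempty}) :
    ∀ x, Φ x = ∅ := by
  -- key step: no point of any Φ x has a neighborhood where γ is constant
  have key1 : ∀ (x z : I), z ∈ Φ x → ∀ O : Set I, IsOpen O → z ∈ O →
      (∀ u ∈ O, γ u = γ z) → False := by
    intro x z hz O hO hzO hOc
    have hγz : γ z = x := hsect x hz
    have hUopen := hlsc O hO
    have hxU : x ∈ {x' : I | (O ∩ Φ x').Nonempty} := ⟨z, hzO, hz⟩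
    have hUsub : {x' : I | (O ∩ Φ x').Nonempty} ⊆ {x} := by
      rintro x' ⟨z', hz'O, hz'Φ⟩
      have e1 : γ z' = x' := hsect x' hz'Φ
      have e2 : γ z' = γ z := hOc z' hz'O
      simp only [Set.mem_singleton_iff]
      rw [← e1, e2, hγz]
    have : {x' : I | (O ∩ Φ x').Nonempty} = {x} :=
      subset_antisymm hUsub (by rintro w rfl; exact hxU)
    exact I_not_isOpen_singleton x (this ▸ hUopen)
  have hN : IsOpen {x : I | (Φ x).Nonempty} := by
    have := hlsc Set.univ isOpen_univ
    simpa using this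
  intro x₀
  by_contra hne
  have hx₀N : x₀ ∈ {x : I | (Φ x).Nonempty} := Set.nonempty_iff_ne_empty.mpr hne
  -- get a point x₁ ∈ N with x₁ < 1
  obtain ⟨x₁, hx₁N, hx₁1⟩ : ∃ x₁ : I, x₁ ∈ {x : I | (Φ x).Nonempty} ∧ (x₁:ℝ) < 1 := by
    rcases lt_or_eq_of_le x₀.2.2 with hlt | heq
    · exact ⟨x₀, hx₀N, hlt⟩
    · obtain ⟨y, hyN, hyx⟩ := exists_lt_of_isOpen hN hx₀N (by rw [heq]; norm_num)
      exact ⟨y, hyN, by have := Subtype.coe_lt_coe.mpr hyx; rw [heq] at this; exact this⟩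
  obtain ⟨y₁, hy₁⟩ := id hx₁N
  -- maximum of the fiber of x₁
  have hFc : IsClosed (γ ⁻¹' {x₁}) := (isClosed_singleton).preimage hcont
  have hFcpt : IsCompact (Subtype.val '' (γ ⁻¹' {x₁})) :=
    (hFc.isCompact).image continuous_subtype_val
  obtain ⟨vr, hvrF, hvmax⟩ := hFcpt.exists_isGreatest
    ⟨(y₁:ℝ), ⟨y₁, hsect x₁ hy₁, rfl⟩⟩
  obtain ⟨v, hvF, rfl⟩ := hvrF
  have hγv : γ v = x₁ := hvF
  have hv1 : (v:ℝ) < 1 := by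
    rcases lt_or_eq_of_le v.2.2 with h | h
    · exact h
    · exfalso
      have hv1' : v = 1 := Subtype.ext (by rw [h]; simp)
      rw [hv1', h1] at hγv
      rw [← hγv] at hx₁1
      simp at hx₁1
  obtain ⟨ε, hε, hball⟩ := Metric.isOpen_iff.mp hN x₁ hx₁N
  set r : ℝ := min ε (1 - (x₁:ℝ)) with hrdef
  have hr : 0 < r := lt_min hε (by linarith)
  obtain ⟨δ, hδ, hδc⟩ := Metric.continuous_iff.mp hcont v r hr
  -- find a non-Cantor point just above v
  have hvb : (v:ℝ) < min ((v:ℝ) + δ) 1 := lt_min (by linarith) hv1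
  obtain ⟨z, hzIoo, hznc⟩ := exists_not_mem_cantorSet hvb
  have hz0 : (0:ℝ) ≤ z := le_of_lt (lt_of_le_of_lt v.2.1 hzIoo.1)
  have hz1 : z ≤ 1 := le_of_lt (lt_of_lt_of_le hzIoo.2 (min_le_right _ _))
  set z₀ : I := ⟨z, hz0, hz1⟩ with hz₀def
  have hvz : (v:ℝ) < (z₀:ℝ) := hzIoo.1
  have hdistzv : dist z₀ v < δ := by
    rw [Subtype.dist_eq, Real.dist_eq, abs_of_nonneg (by linarith [hvz])]
    show (z:ℝ) - (v:ℝ) < δ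
    have := lt_of_lt_of_le hzIoo.2 (min_le_left _ _)
    linarith
  have hdistc := hδc z₀ hdistzv
  set c : I := γ z₀ with hcdef
  have hx₁c : x₁ < c := by
    have hle : x₁ ≤ c := hγv ▸ hmono (le_of_lt (Subtype.mk_lt_mk.mpr hvz))
    rcases lt_or_eq_of_le hle with h | h
    · exact h
    · exfalso
      have hmem : z₀ ∈ γ ⁻¹' {x₁} := by
        show γ z₀ ∈ ({x₁} : Set I)
        rw [← hcdef, ← h]
        exact rfl
      have := hvmax ⟨z₀, hmem, rfl⟩
      change (z₀:ℝ) ≤ (v:ℝ) at this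
      linarith
  have hcx₁r : (c:ℝ) - (x₁:ℝ) < r := by
    rw [hγv] at hdistc
    rw [Subtype.dist_eq, Real.dist_eq] at hdistc
    calc (c:ℝ) - (x₁:ℝ) ≤ |(c:ℝ) - (x₁:ℝ)| := le_abs_self _
    _ < r := hdistc
  have hcoe_lt : (x₁:ℝ) < (c:ℝ) := Subtype.coe_lt_coe.mpr hx₁c
  have hc1 : (c:ℝ) < 1 := by
    have : r ≤ 1 - (x₁:ℝ) := min_le_right _ _
    linarith
  have hc0 : (0:ℝ) < (c:ℝ) := lt_of_le_of_lt x₁.2.1 hcoe_lt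
  have hcN : c ∈ {x : I | (Φ x).Nonempty} := by
    apply hball
    rw [Metric.mem_ball, Subtype.dist_eq, Real.dist_eq,
      abs_of_nonneg (by linarith : (0:ℝ) ≤ (c:ℝ) - (x₁:ℝ))]
    have : r ≤ ε := min_le_left _ _
    linarith
  -- γ is constant near z₀
  obtain ⟨W, hW, hWc⟩ := hconst z₀ hznc
  obtain ⟨η₀, hη₀, hη₀b⟩ := Metric.mem_nhds_iff.mp hW
  have hzlt1 : z < 1 := lt_of_lt_of_le hzIoo.2 (min_le_right _ _)
  set η : ℝ := min η₀ (min (z - (v:ℝ)) (1 - z)) with hηdef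
  have hη : 0 < η := lt_min hη₀ (lt_min (by linarith) (by linarith))
  have hηzv : η ≤ z - (v:ℝ) := le_trans (min_le_right _ _) (min_le_left _ _)
  have hηz1 : η ≤ 1 - z := le_trans (min_le_right _ _) (min_le_right _ _)
  have hOconst : ∀ u ∈ Metric.ball z₀ η, γ u = c := by
    intro u hu
    exact hWc u (hη₀b (Metric.ball_subset_ball (min_le_left _ _) hu))
  -- Φ-points avoid the ball around z₀
  have havoid : ∀ (x : I) (z' : I), z' ∈ Φ x → η ≤ |(z':ℝ) - z| := by
    intro x z' hz'
    by_contra hcon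
    push_neg at hcon
    have hz'O : z' ∈ Metric.ball z₀ η := by
      rw [Metric.mem_ball, Subtype.dist_eq, Real.dist_eq]; exact hcon
    exact key1 x z' hz' (Metric.ball z₀ η) Metric.isOpen_ball hz'O
      (fun u hu => by rw [hOconst u hu, hOconst z' hz'O])
  obtain ⟨w, hw⟩ := hcN
  have hwav := havoid c w hw
  have hγw : γ w = c := hsect c hw
  rcases lt_trichotomy ((w:ℝ)) z with hwz | hwz | hwz
  · -- w below z : consider V = {u < z}
    have hVopen : IsOpen {u : I | (u:ℝ) < z} := isOpen_Iio.preimage continuous_subtype_val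
    have hUopen := hlsc _ hVopen
    have hcU : c ∈ {x : I | ({u : I | (u:ℝ) < z} ∩ Φ x).Nonempty} := ⟨w, hwz, hw⟩
    have hUle : ∀ x ∈ {x : I | ({u : I | (u:ℝ) < z} ∩ Φ x).Nonempty}, x ≤ c := by
      rintro x ⟨z', hz'V, hz'Φ⟩
      have hav := havoid x z' hz'Φ
      have hz'z : (z':ℝ) < z := hz'V
      have hz'le : (z':ℝ) ≤ z - η := by
        rw [abs_of_nonpos (by linarith)] at hav; linarith
      have ht0 : (0:ℝ) ≤ z - η := by have := v.2.1; linarith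
      have hmono1 : γ z' ≤ γ (⟨z - η, ht0, by linarith⟩ : I) :=
        hmono (Subtype.mk_le_mk.mpr hz'le)
      have hmono2 : γ (⟨z - η, ht0, by linarith⟩ : I) ≤ c :=
        hcdef ▸ hmono (Subtype.mk_le_mk.mpr (by linarith))
      have := hsect x hz'Φ
      rw [Set.mem_preimage, Set.mem_singleton_iff] at this
      rw [← this]
      exact le_trans hmono1 hmono2
    obtain ⟨y, hyU, hcy⟩ := exists_gt_of_isOpen hUopen hcU hc1
    exact absurd (hUle y hyU) (not_le.mpr hcy)
  · exact absurd hwav (by rw [hwz]; simp [not_le, sub_self]; exact hη)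
  · -- w above z : consider V = {u > z}
    have hVopen : IsOpen {u : I | z < (u:ℝ)} := isOpen_Ioi.preimage continuous_subtype_val
    have hUopen := hlsc _ hVopen
    have hcU : c ∈ {x : I | ({u : I | z < (u:ℝ)} ∩ Φ x).Nonempty} := ⟨w, hwz, hw⟩
    have hUle : ∀ x ∈ {x : I | ({u : I | z < (u:ℝ)} ∩ Φ x).Nonempty}, c ≤ x := by
      rintro x ⟨z', hz'V, hz'Φ⟩
      have hav := havoid x z' hz'Φ
      have hz'z : z < (z':ℝ) := hz'V
      have hz'le : z + η ≤ (z':ℝ) := by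
        rw [abs_of_nonneg (by linarith)] at hav; linarith
      have ht1 : z + η ≤ 1 := by linarith
      have hmono1 : γ (⟨z + η, by linarith, ht1⟩ : I) ≤ γ z' :=
        hmono (Subtype.mk_le_mk.mpr hz'le)
      have hmono2 : c ≤ γ (⟨z + η, by linarith, ht1⟩ : I) :=
        hcdef ▸ hmono (Subtype.mk_le_mk.mpr (by linarith))
      have := hsect x hz'Φ
      rw [Set.mem_preimage, Set.mem_singleton_iff] at this
      rw [← this]
      exact le_trans hmono2 hmono1
    obtain ⟨y, hyU, hcy⟩ := exists_lt_of_isOpen hUopen hcU hc0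
    exact absurd (hUle y hyU) (not_le.mpr hcy)



noncomputable def ofR (f : C(I,ℝ)) : C(I,ℂ) :=
  ⟨fun w => ((f w : ℝ) : ℂ), Complex.continuous_ofReal.comp f.continuous⟩

@[simp] lemma ofR_apply (f : C(I,ℝ)) (w : I) : ofR f w = ((f w : ℝ) : ℂ) := rfl

lemma ofR_sum {β : Type*} {s : Finset β} (f : β → C(I,ℝ)) :
    ofR (∑ z ∈ s, f z) = ∑ z ∈ s, ofR (f z) := by
  ext w; simp [ContinuousMap.sum_apply]

set_option maxHeartbeats 1000000 in
set_option synthInstance.maxHeartbeats 100000 in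
lemma cantor_part2
    (γ : I → I) (hcont : Continuous γ)
    (part1 : ∀ Φ : I → Set I, (∀ x, IsClosed (Φ x)) → (∀ x, Φ x ⊆ γ ⁻¹' {x}) →
      (∀ V : Set I, IsOpen V → IsOpen {x : I | (V ∩ Φ x).Nonempty}) →
      ∀ x, Φ x = ∅)
    (α : C(I, ℂ) →⋆ₐ[ℂ] C(I, ℂ))
    (hα : ∀ (a : C(I, ℂ)) (x : I), α a x = a (γ x))
    (L : C(I, ℂ) →L[ℂ] C(I, ℂ))
    (hpos : ∀ a : C(I, ℂ), (∀ x, 0 ≤ a x) → ∀ x, 0 ≤ L a x)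
    (htrans : ∀ a b : C(I, ℂ), L (α a * b) = a * L b) :
    L = 0 := by
  -- basic complex order facts
  have creal : ∀ t : ℂ, 0 ≤ t → 0 ≤ t.re ∧ t.im = 0 := by
    intro t ht
    obtain ⟨h1, h2⟩ := Complex.le_def.mp ht
    exact ⟨by simpa using h1, by simpa using h2.symm⟩
  have hone : ∀ w : I, (0:ℂ) ≤ (1 : C(I,ℂ)) w := by
    intro w; simp
  -- monotonicity of L
  have hLmono : ∀ F G : C(I,ℂ), (∀ w, F w ≤ G w) → ∀ x, L F x ≤ L G x := by
    intro F G hle x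
    have h := hpos (G - F) (fun w => by
      rw [ContinuousMap.sub_apply]; exact sub_nonneg.mpr (hle w)) x
    rw [map_sub, ContinuousMap.sub_apply] at h
    exact sub_nonneg.mp h
  -- evaluated transfer identity
  have lem1 : ∀ (a : C(I,ℂ)) (x : I), a x = 0 → L (α a) x = 0 := by
    intro a x hax
    have h := htrans a 1
    rw [mul_one] at h
    rw [h, ContinuousMap.mul_apply, hax, zero_mul]
  -- L of a nonneg function vanishing on the fiber of x vanishes at x
  have lem2 : ∀ (x : I) (f : C(I,ℝ)), (∀ w, 0 ≤ f w) → (∀ z, γ z = x → f z = 0) →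
      L (ofR f) x = 0 := by
    intro x f hf hvan
    have hnn : 0 ≤ L (ofR f) x := hpos _ (fun w => by simpa using hf w) x
    have hC := creal _ (hpos 1 hone x)
    have hmain : ∀ ε : ℝ, 0 < ε → (L (ofR f) x).re ≤ ε * (L 1 x).re := by
      intro ε hε
      have hOopen : IsOpen {w : I | f w < ε} := isOpen_Iio.preimage f.continuous
      set dx : C(I,ℝ) := ⟨fun t => dist t x, (continuous_id.dist continuous_const)⟩ with hdx
      have key : ∃ G : C(I,ℂ), (∀ w, ofR f w ≤ ((ε:ℂ) • 1 + G) w) ∧ L G x = 0 := by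
        by_cases hne : ({w : I | f w < ε}ᶜ).Nonempty
        · have hKcpt : IsCompact ({w : I | f w < ε}ᶜ) := hOopen.isClosed_compl.isCompact
          have hIcpt : IsCompact (γ '' ({w : I | f w < ε}ᶜ)) := hKcpt.image hcont
          obtain ⟨p, hpmem, hpmin⟩ := hIcpt.exists_isMinOn (hne.image γ)
            ((continuous_id.dist continuous_const).continuousOn :
              ContinuousOn (fun t : I => dist t x) _)
          have hd0 : 0 < dist p x := by
            rcases eq_or_lt_of_le (dist_nonneg : (0:ℝ) ≤ dist p x) with h | h
            · exfalso
              obtain ⟨u, huK, hupu⟩ := hpmem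
              have hpx : p = x := dist_eq_zero.mp h.symm
              have : γ u = x := by rw [hupu, hpx]
              have hfu : f u = 0 := hvan u this
              have : ¬ (f u < ε) := huK
              rw [hfu] at this
              exact this hε
            · exact h
          set M : ℝ := ‖f‖ / dist p x with hM
          have hM0 : 0 ≤ M := div_nonneg (norm_nonneg f) hd0.le
          refine ⟨α (ofR (M • dx)), ?_, ?_⟩
          · intro w
            have hreal : f w ≤ ε + M * dist (γ w) x := by
              by_cases hw : f w < ε
              · have : 0 ≤ M * dist (γ w) x := mul_nonneg hM0 dist_nonneg
                linarith
              · have hwK : w ∈ {w : I | f w < ε}ᶜ := hw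
                have hdist : dist p x ≤ dist (γ w) x :=
                  hpmin (Set.mem_image_of_mem γ hwK)
                have hfw : f w ≤ ‖f‖ := by
                  have := f.norm_coe_le_norm w
                  have h2 : f w ≤ ‖f w‖ := le_abs_self _
                  linarith
                have : ‖f‖ ≤ M * dist (γ w) x := by
                  rw [hM, div_mul_eq_mul_div, le_div_iff₀ hd0]
                  nlinarith [norm_nonneg f]
                linarith
            have hGw : ((ε:ℂ) • (1:C(I,ℂ)) + α (ofR (M • dx))) w
                = ((ε + M * dist (γ w) x : ℝ) : ℂ) := by
              rw [ContinuousMap.add_apply, ContinuousMap.smul_apply, hα]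
              simp only [ofR_apply, ContinuousMap.one_apply, ContinuousMap.smul_apply,
                smul_eq_mul, hdx, ContinuousMap.coe_mk]
              push_cast
              ring
            rw [ofR_apply, hGw]
            exact Complex.real_le_real.mpr hreal
          · have h := htrans (ofR (M • dx)) 1
            rw [mul_one] at h
            rw [h, ContinuousMap.mul_apply]
            have : ofR (M • dx) x = 0 := by
              simp [hdx]
            rw [this, zero_mul]
        · refine ⟨0, ?_, by simp⟩
          intro w
          have hw : f w < ε := by
            by_contra hcon
            exact hne ⟨w, hcon⟩
          rw [ContinuousMap.add_apply]
          simp only [ofR_apply, ContinuousMap.zero_apply, add_zero, ContinuousMap.smul_apply,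
            ContinuousMap.one_apply, smul_eq_mul, mul_one]
          exact Complex.real_le_real.mpr hw.le
      obtain ⟨G, hG1, hG2⟩ := key
      have hfin := hLmono _ _ hG1 x
      rw [map_add, ContinuousMap.add_apply, map_smul, ContinuousMap.smul_apply, hG2, add_zero,
        smul_eq_mul] at hfin
      have := (Complex.le_def.mp hfin).1
      rwa [Complex.re_ofReal_mul] at this
    obtain ⟨ht0, htim⟩ := creal _ hnn
    have htle : (L (ofR f) x).re ≤ 0 := by
      by_contra hcon
      push_neg at hcon
      have hden : 0 < 2 * ((L 1 x).re + 1) := by nlinarith [hC.1]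
      have hd : 0 < (L (ofR f) x).re / (2 * ((L 1 x).re + 1)) := div_pos hcon hden
      have hthis := hmain _ hd
      rw [div_mul_eq_mul_div, le_div_iff₀ hden] at hthis
      nlinarith [hC.1]
    have : (L (ofR f) x).re = 0 := le_antisymm htle ht0
    exact Complex.ext (by simpa using this) (by simpa using htim)
  -- the candidate lower semicontinuous section: the support of L at x
  set Φ : I → Set I :=
    fun x => {z : I | ∀ b : C(I,ℂ), (∀ w, 0 ≤ b w) → L b x = 0 → b z = 0} with hΦdef
  -- witnesses for points outside Φ x, upgraded to real-valued functions
  have hwit : ∀ (x z : I), z ∉ Φ x →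
      ∃ β : C(I,ℝ), (∀ w, 0 ≤ β w) ∧ L (ofR β) x = 0 ∧ 0 < β z := by
    intro x z hz
    simp only [hΦdef, Set.mem_setOf_eq] at hz
    push_neg at hz
    obtain ⟨b, hb0, hLb, hbz⟩ := hz
    refine ⟨⟨fun w => (b w).re, Complex.continuous_re.comp b.continuous⟩, ?_, ?_, ?_⟩
    · intro w
      exact (creal _ (hb0 w)).1
    · have hofR : ofR ⟨fun w => (b w).re, Complex.continuous_re.comp b.continuous⟩ = b := by
        ext w
        simp only [ofR_apply, ContinuousMap.coe_mk]
        exact Complex.ext (by simp) (by simp [(creal _ (hb0 w)).2])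
      rw [hofR]
      exact hLb
    · simp only [ContinuousMap.coe_mk]
      rcases lt_or_eq_of_le (creal _ (hb0 z)).1 with h | h
      · exact h
      · exfalso
        exact hbz (Complex.ext (by simp [← h]) (by simp [(creal _ (hb0 z)).2]))
  -- main support lemma
  have lem3 : ∀ (x : I) (f : C(I,ℝ)), (∀ w, 0 ≤ f w) →
      (∀ z, γ z = x → z ∈ tsupport (⇑f) → z ∉ Φ x) → L (ofR f) x = 0 := by
    intro x f hf hdisj
    by_cases hKne : (γ ⁻¹' {x} ∩ tsupport (⇑f)).Nonempty
    · set K := γ ⁻¹' {x} ∩ tsupport (⇑f) with hK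
      have hKcl : IsClosed K :=
        (isClosed_singleton.preimage hcont).inter (isClosed_tsupport _)
      have hKcpt : IsCompact K := hKcl.isCompact
      -- choose witnesses over K
      have hwitK : ∀ z : K, ∃ β : C(I,ℝ), (∀ w, 0 ≤ β w) ∧ L (ofR β) x = 0 ∧ 0 < β z := by
        intro z
        exact hwit x z (hdisj z z.2.1 z.2.2)
      choose β hβ0 hβL hβz using hwitK
      obtain ⟨t, ht⟩ := hKcpt.elim_finite_subcover (fun z : K => {w : I | 0 < β z w})
        (fun z => isOpen_Ioi.preimage (β z).continuous)
        (fun w hw => Set.mem_iUnion.mpr ⟨⟨w, hw⟩, hβz ⟨w, hw⟩⟩)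
      set s : C(I,ℝ) := ∑ z ∈ t, β z with hs
      have hs0 : ∀ w, 0 ≤ s w := by
        intro w
        rw [hs, ContinuousMap.sum_apply]
        exact Finset.sum_nonneg (fun z _ => hβ0 z w)
      have hsL : L (ofR s) x = 0 := by
        rw [hs, ofR_sum, map_sum, ContinuousMap.sum_apply]
        exact Finset.sum_eq_zero (fun z _ => hβL z)
      have hsK : ∀ w ∈ K, 0 < s w := by
        intro w hw
        obtain ⟨z, hzt, hzw⟩ := Set.mem_iUnion₂.mp (ht hw)
        rw [hs, ContinuousMap.sum_apply]
        exact lt_of_lt_of_le hzw (Finset.single_le_sum (fun z' _ => hβ0 z' w) hzt)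
      obtain ⟨k₀, hk₀K, hk₀min⟩ := hKcpt.exists_isMinOn hKne s.continuous.continuousOn
      set m : ℝ := s k₀ with hm
      have hm0 : 0 < m := hsK k₀ hk₀K
      set M : ℝ := ‖f‖ / m with hM
      have hM0 : 0 ≤ M := div_nonneg (norm_nonneg f) hm0.le
      set g : C(I,ℝ) := (f - M • s) ⊔ 0 with hg
      have hgapp : ∀ w, g w = max (f w - M * s w) 0 := by
        intro w
        rw [hg]
        rfl
      have hg0 : ∀ w, 0 ≤ g w := by
        intro w; rw [hgapp]; exact le_max_right _ _
      have hgfib : ∀ z, γ z = x → g z = 0 := by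
        intro z hγz
        rw [hgapp]
        by_cases hfz : f z = 0
        · rw [hfz]
          have : 0 ≤ M * s z := mul_nonneg hM0 (hs0 z)
          rw [max_eq_right]
          linarith
        · have hzK : z ∈ K :=
            ⟨hγz, subset_closure (Function.mem_support.mpr hfz)⟩
          have h1 : m ≤ s z := hk₀min hzK
          have h2 : f z ≤ ‖f‖ := by
            have := f.norm_coe_le_norm z
            have h3 : f z ≤ ‖f z‖ := le_abs_self _
            linarith
          have : f z ≤ M * s z := by
            rw [hM, div_mul_eq_mul_div, le_div_iff₀ hm0]
            nlinarith [norm_nonneg f]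
          rw [max_eq_right]
          linarith
      have hgL : L (ofR g) x = 0 := lem2 x g hg0 hgfib
      have hfle : ∀ w, ofR f w ≤ (ofR g + (M:ℂ) • ofR s) w := by
        intro w
        rw [ContinuousMap.add_apply, ContinuousMap.smul_apply]
        simp only [ofR_apply, smul_eq_mul]
        have h1 : f w - M * s w ≤ g w := by rw [hgapp]; exact le_max_left _ _
        have : ((f w : ℝ) : ℂ) ≤ ((g w + M * s w : ℝ) : ℂ) :=
          Complex.real_le_real.mpr (by linarith)
        push_cast at this
        convert this using 1
      have hfin := hLmono _ _ hfle x
      rw [map_add, ContinuousMap.add_apply, map_smul, ContinuousMap.smul_apply, hgL, hsL,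
        smul_eq_mul, mul_zero, add_zero] at hfin
      have hnn : 0 ≤ L (ofR f) x := hpos _ (fun w => by simpa using hf w) x
      exact le_antisymm hfin hnn
    · -- f vanishes on the fiber
      apply lem2 x f hf
      intro z hγz
      by_contra hfz
      exact hKne ⟨z, hγz, subset_closure (Function.mem_support.mpr hfz)⟩
  -- Φ is closed-valued
  have hΦclosed : ∀ x, IsClosed (Φ x) := by
    intro x
    rw [← isOpen_compl_iff, isOpen_iff_mem_nhds]
    intro z hz
    simp only [hΦdef, Set.mem_compl_iff, Set.mem_setOf_eq] at hz
    push_neg at hz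
    obtain ⟨b, hb0, hLb, hbz⟩ := hz
    have hopen : IsOpen {w : I | b w ≠ 0} :=
      isOpen_compl_singleton.preimage b.continuous
    apply Filter.mem_of_superset (hopen.mem_nhds hbz)
    intro w hw
    simp only [hΦdef, Set.mem_compl_iff, Set.mem_setOf_eq]
    push_neg
    exact ⟨b, hb0, hLb, hw⟩
  -- Φ x is contained in the fiber of x
  have hΦsub : ∀ x, Φ x ⊆ γ ⁻¹' {x} := by
    intro x z hz
    simp only [Set.mem_preimage, Set.mem_singleton_iff]
    by_contra hne
    set dx : C(I,ℝ) := ⟨fun t => dist t x, (continuous_id.dist continuous_const)⟩ with hdx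
    have hb0 : ∀ w, 0 ≤ α (ofR dx) w := by
      intro w
      rw [hα]
      simp [hdx, dist_nonneg]
    have hLb : L (α (ofR dx)) x = 0 := by
      apply lem1
      simp [hdx]
    have := hz (α (ofR dx)) hb0 hLb
    rw [hα] at this
    simp only [ofR_apply, hdx, ContinuousMap.coe_mk, Complex.ofReal_eq_zero] at this
    exact hne (dist_eq_zero.mp this)
  -- Φ is lower semicontinuous
  have hΦlsc : ∀ V : Set I, IsOpen V → IsOpen {x : I | (V ∩ Φ x).Nonempty} := by
    intro V hV
    rw [isOpen_iff_mem_nhds]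
    rintro x₀ ⟨z, hzV, hzΦ⟩
    obtain ⟨r', hr', hball⟩ := Metric.isOpen_iff.mp hV z hzV
    set r : ℝ := r'/2 with hrdef
    have hr : 0 < r := by linarith
    set f : C(I,ℝ) := ⟨fun w => max (r - dist w z) 0,
      ((continuous_const.sub (continuous_id.dist continuous_const)).max continuous_const)⟩
      with hfdef
    have hf0 : ∀ w, 0 ≤ f w := fun w => le_max_right _ _
    have hfz : f z = r := by
      simp [hfdef, hr.le]
    have hsupp : tsupport (⇑f) ⊆ Metric.closedBall z r := by
      apply closure_minimal _ Metric.isClosed_closedBall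
      intro w hw
      rw [Function.mem_support] at hw
      simp only [hfdef, ContinuousMap.coe_mk] at hw
      rw [Metric.mem_closedBall]
      by_contra hcon
      push_neg at hcon
      apply hw
      exact max_eq_right (by linarith)
    have hballV : Metric.closedBall z r ⊆ V :=
      le_trans (Metric.closedBall_subset_ball (by linarith)) hball
    have hLfx₀ : L (ofR f) x₀ ≠ 0 := by
      intro h
      have := hzΦ (ofR f) (fun w => by simpa using hf0 w) h
      simp only [ofR_apply, Complex.ofReal_eq_zero] at this
      rw [hfz] at this
      linarith
    have hUopen : IsOpen {x : I | L (ofR f) x ≠ 0} :=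
      isOpen_compl_singleton.preimage (L (ofR f)).continuous
    apply Filter.mem_of_superset (hUopen.mem_nhds hLfx₀)
    intro x hx
    by_contra hemp
    apply hx
    apply lem3 x f hf0
    intro z' hγz' hz'supp
    intro hz'Φ
    exact hemp ⟨z', hballV (hsupp hz'supp), hz'Φ⟩
  -- by part 1, Φ is identically empty
  have hΦempty := part1 Φ hΦclosed hΦsub hΦlsc
  -- hence L 1 = 0 pointwise
  have hL1 : ∀ x, L 1 x = 0 := by
    intro x
    have h1 : ofR (1 : C(I,ℝ)) = (1 : C(I,ℂ)) := by
      ext w; simp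
    rw [← h1]
    apply lem3 x 1 (fun w => by norm_num)
    intro z _ _
    rw [hΦempty x]
    exact Set.notMem_empty z
  -- hence L kills all nonnegative real functions
  have hLnonneg : ∀ f : C(I,ℝ), (∀ w, 0 ≤ f w) → L (ofR f) = 0 := by
    intro f hf
    ext x
    have hb : ∀ w, ofR f w ≤ ((‖f‖:ℂ) • (1:C(I,ℂ))) w := by
      intro w
      rw [ContinuousMap.smul_apply]
      simp only [ofR_apply, ContinuousMap.one_apply, smul_eq_mul, mul_one]
      apply Complex.real_le_real.mpr
      have := f.norm_coe_le_norm w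
      have h3 : f w ≤ ‖f w‖ := le_abs_self _
      linarith
    have hle := hLmono _ _ hb x
    rw [map_smul, ContinuousMap.smul_apply, hL1, smul_eq_mul, mul_zero] at hle
    have hge : 0 ≤ L (ofR f) x := hpos _ (fun w => by simpa using hf w) x
    rw [ContinuousMap.zero_apply]
    exact le_antisymm hle hge
  -- decompose arbitrary functions
  apply ContinuousLinearMap.ext
  intro F
  have hre : Continuous fun w : I => (F w).re := Complex.continuous_re.comp F.continuous
  have him : Continuous fun w : I => (F w).im := Complex.continuous_im.comp F.continuous
  set f₁ : C(I,ℝ) := ⟨fun w => max (F w).re 0, hre.max continuous_const⟩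
  set f₂ : C(I,ℝ) := ⟨fun w => max (-(F w).re) 0, hre.neg.max continuous_const⟩
  set f₃ : C(I,ℝ) := ⟨fun w => max (F w).im 0, him.max continuous_const⟩
  set f₄ : C(I,ℝ) := ⟨fun w => max (-(F w).im) 0, him.neg.max continuous_const⟩
  have hdecomp : F = ofR f₁ - ofR f₂ + Complex.I • (ofR f₃ - ofR f₄) := by
    ext w
    simp only [ContinuousMap.add_apply, ContinuousMap.sub_apply, ContinuousMap.smul_apply,
      ofR_apply, ContinuousMap.coe_mk, smul_eq_mul]
    have h1 : max (F w).re 0 - max (-(F w).re) 0 = (F w).re := by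
      rcases le_total ((F w).re) 0 with h | h
      · rw [max_eq_right h, max_eq_left (by linarith)]; ring
      · rw [max_eq_left h, max_eq_right (by linarith)]; ring
    have h2 : max (F w).im 0 - max (-(F w).im) 0 = (F w).im := by
      rcases le_total ((F w).im) 0 with h | h
      · rw [max_eq_right h, max_eq_left (by linarith)]; ring
      · rw [max_eq_left h, max_eq_right (by linarith)]; ring
    have hkey : ((max (F w).re 0 : ℝ):ℂ) - ((max (-(F w).re) 0 : ℝ):ℂ)
        + Complex.I * (((max (F w).im 0 : ℝ):ℂ) - ((max (-(F w).im) 0 : ℝ):ℂ)) = F w := by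
      rw [← Complex.ofReal_sub, ← Complex.ofReal_sub, h1, h2, mul_comm]
      exact Complex.re_add_im (F w)
    simp only [f₁, f₂, f₃, f₄, ContinuousMap.coe_mk]
    exact hkey.symm
  rw [hdecomp]
  rw [map_add, map_sub, map_smul, map_sub]
  rw [hLnonneg f₁ (fun w => le_max_right _ _), hLnonneg f₂ (fun w => le_max_right _ _),
    hLnonneg f₃ (fun w => le_max_right _ _), hLnonneg f₄ (fun w => le_max_right _ _)]
  simp only [sub_self, ContinuousLinearMap.zero_apply]
  rw [zero_add]
  exact smul_zero (M := ℂ) (A := C(I, ℂ)) Complex.I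

/-- Let γ : [0,1] → [0,1] be the Cantor function (the continuous
nondecreasing map with γ(0) = 0, γ(1) = 1, locally constant off the Cantor
set), and α(a) = a ∘ γ on C([0,1]). Then the only lower semicontinuous section
Φ of γ (Φ(x) ⊆ γ⁻¹(x) closed, {x : V ∩ Φ(x) ≠ ∅} open for every open V) is
Φ ≡ ∅, and consequently the only transfer operator for (C([0,1]), α) is 0. -/
theorem cantor_function_no_transfer
    (γ : I → I) (hcont : Continuous γ) (hmono : Monotone γ)
    (h0 : γ 0 = 0) (h1 : γ 1 = 1)
    -- γ is locally constant off the Cantor set (Devil's staircase)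
    (hconst : ∀ x : I, (x : ℝ) ∉ cantorSet →
      ∃ W ∈ nhds x, ∀ y ∈ W, γ y = γ x)
    (α : C(I, ℂ) →⋆ₐ[ℂ] C(I, ℂ))
    (hα : ∀ (a : C(I, ℂ)) (x : I), α a x = a (γ x)) :
    -- the only lower semicontinuous section of γ is identically ∅
    (∀ Φ : I → Set I, (∀ x, IsClosed (Φ x)) → (∀ x, Φ x ⊆ γ ⁻¹' {x}) →
      (∀ V : Set I, IsOpen V → IsOpen {x : I | (V ∩ Φ x).Nonempty}) →
      ∀ x, Φ x = ∅) ∧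
    -- consequently, the only transfer operator for (C([0,1]), α) is zero
    (∀ L : C(I, ℂ) →L[ℂ] C(I, ℂ),
      (∀ a : C(I, ℂ), (∀ x, 0 ≤ a x) → ∀ x, 0 ≤ L a x) →
      (∀ a b : C(I, ℂ), L (α a * b) = a * L b) →
      L = 0) := by
  have p1 : ∀ Φ : I → Set I, (∀ x, IsClosed (Φ x)) → (∀ x, Φ x ⊆ γ ⁻¹' {x}) →
      (∀ V : Set I, IsOpen V → IsOpen {x : I | (V ∩ Φ x).Nonempty}) → ∀ x, Φ x = ∅ :=
    fun Φ _ hs hl => cantor_part1 γ hcont hmono h1 hconst Φ hs hl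
  exact ⟨p1, fun L hpos htrans => cantor_part2 γ hcont p1 α hα L hpos htrans⟩
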